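/- Let f(x) = (1/√(2π))·exp(-x²/2) and Φ(x) = ∫_{-∞}^x f(t) dt be the standard normal cdf. Then for all real x, Φ(x)/(2f(x)) > 1/(-x + √(x²+4)). -/

import Mathlib

open Real MeasureTheory Set

noncomputable def stdNormalPdf (x : ℝ) : ℝ := (Real.sqrt (2 * Real.pi))⁻¹ * Real.exp (-x ^ 2 / 2)

noncomputable def gaussQ (x : ℝ) : ℝ := ∫ t in Set.Ici x, stdNormalPdf t

noncomputable def gaussPhi (x : ℝ) : ℝ := ∫ t in Set.Iic x, stdNormalPdf t

noncomputable def kAux (x : ℝ) : ℝ := (x + Real.sqrt (x ^ 2 + 4)) / 2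

noncomputable def gAux (x : ℝ) : ℝ :=
  Real.sqrt (2 * Real.pi) * gaussPhi x - kAux x * Real.exp (-x ^ 2 / 2)

lemma sAux_pos (x : ℝ) : 0 < Real.sqrt (x ^ 2 + 4) :=
  Real.sqrt_pos.2 (by positivity)

lemma sAux_sq (x : ℝ) : (Real.sqrt (x ^ 2 + 4)) ^ 2 = x ^ 2 + 4 :=
  Real.sq_sqrt (by positivity)

lemma pdf_continuous : Continuous stdNormalPdf := by
  unfold stdNormalPdf; continuity

lemma pdf_pos (x : ℝ) : 0 < stdNormalPdf x := by
  unfold stdNormalPdf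
  positivity

lemma pdf_integrable : Integrable stdNormalPdf := by
  have h : stdNormalPdf = fun t => (Real.sqrt (2 * Real.pi))⁻¹ * Real.exp (-(1/2) * t ^ 2) := by
    funext t; unfold stdNormalPdf; ring_nf
  rw [h]
  exact (integrable_exp_neg_mul_sq (by norm_num)).const_mul _

lemma gaussPhi_eq (x : ℝ) :
    gaussPhi x = gaussPhi 0 + ∫ t in (0:ℝ)..x, stdNormalPdf t := by
  have := intervalIntegral.integral_Iic_sub_Iic (μ := volume) (f := stdNormalPdf)
    pdf_integrable.integrableOn pdf_integrable.integrableOn (a := 0) (b := x)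
  unfold gaussPhi
  linarith

lemma gaussPhi_hasDeriv (x : ℝ) : HasDerivAt gaussPhi (stdNormalPdf x) x := by
  have h : HasDerivAt (fun u => ∫ t in (0:ℝ)..u, stdNormalPdf t) (stdNormalPdf x) x :=
    intervalIntegral.integral_hasDerivAt_right pdf_integrable.intervalIntegrable
      (pdf_continuous.stronglyMeasurable.stronglyMeasurableAtFilter)
      pdf_continuous.continuousAt
  have : HasDerivAt (fun u => gaussPhi 0 + ∫ t in (0:ℝ)..u, stdNormalPdf t) (stdNormalPdf x) x :=
    h.const_add _
  exact this.congr_of_eventuallyEq (Filter.Eventually.of_forall fun y => gaussPhi_eq y)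

lemma sAux_hasDeriv (x : ℝ) :
    HasDerivAt (fun y => Real.sqrt (y ^ 2 + 4)) (x / Real.sqrt (x ^ 2 + 4)) x := by
  have h1 : HasDerivAt (fun y : ℝ => y ^ 2 + 4) (2 * x) x := by
    simpa using ((hasDerivAt_pow 2 x).add_const 4)
  have h2 := (Real.hasDerivAt_sqrt (by positivity : x ^ 2 + 4 ≠ 0)).comp x h1
  refine h2.congr_deriv ?_
  field_simp

lemma kAux_hasDeriv (x : ℝ) :
    HasDerivAt kAux ((1 + x / Real.sqrt (x ^ 2 + 4)) / 2) x := by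
  have := ((hasDerivAt_id x).add (sAux_hasDeriv x)).div_const 2
  unfold kAux
  exact this

lemma exp_hasDeriv (x : ℝ) :
    HasDerivAt (fun y : ℝ => Real.exp (-y ^ 2 / 2)) (-x * Real.exp (-x ^ 2 / 2)) x := by
  have h1 : HasDerivAt (fun y : ℝ => -y ^ 2 / 2) (-x) x := by
    have h := ((hasDerivAt_pow 2 x).neg).div_const 2
    refine h.congr_deriv ?_
    push_cast
    ring
  have h2 := h1.exp
  convert h2 using 1
  ring

lemma gAux_deriv_pos (x : ℝ) :
    HasDerivAt gAux
      ((1 - (1 + x / Real.sqrt (x ^ 2 + 4)) / 2 + x * kAux x) * Real.exp (-x ^ 2 / 2)) x := by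
  have h1 : HasDerivAt (fun y => Real.sqrt (2 * Real.pi) * gaussPhi y)
      (Real.sqrt (2 * Real.pi) * stdNormalPdf x) x := (gaussPhi_hasDeriv x).const_mul _
  have h2 : HasDerivAt (fun y => kAux y * Real.exp (-y ^ 2 / 2))
      ((1 + x / Real.sqrt (x ^ 2 + 4)) / 2 * Real.exp (-x ^ 2 / 2)
        + kAux x * (-x * Real.exp (-x ^ 2 / 2))) x :=
    (kAux_hasDeriv x).mul (exp_hasDeriv x)
  have h3 := h1.sub h2
  have hne : Real.sqrt (2 * Real.pi) ≠ 0 := by positivity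
  have hpdf : Real.sqrt (2 * Real.pi) * stdNormalPdf x = Real.exp (-x ^ 2 / 2) := by
    unfold stdNormalPdf; field_simp
  refine h3.congr_deriv ?_
  rw [hpdf]; ring

lemma deriv_factor_pos (x : ℝ) :
    0 < 1 - (1 + x / Real.sqrt (x ^ 2 + 4)) / 2 + x * kAux x := by
  set s := Real.sqrt (x ^ 2 + 4) with hs
  have hsp : 0 < s := sAux_pos x
  have hssq : s ^ 2 = x ^ 2 + 4 := sAux_sq x
  have key : 0 < (x ^ 2 + 1) * s + x * (x ^ 2 + 3) := by
    rcases le_or_gt 0 x with hx | hx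
    · have : 0 < (x ^ 2 + 1) * s := by positivity
      nlinarith
    · -- A = (x²+1)s > 0, B = -x(x²+3) > 0, A² - B² = 4
      have hA : 0 < (x ^ 2 + 1) * s := by positivity
      have hB : 0 < -x * (x ^ 2 + 3) := by nlinarith
      have hd : ((x ^ 2 + 1) * s) ^ 2 - (-x * (x ^ 2 + 3)) ^ 2 = 4 := by nlinarith
      nlinarith [mul_pos hA hB]
  have : 1 - (1 + x / s) / 2 + x * kAux x = ((x ^ 2 + 1) * s + x * (x ^ 2 + 3)) / (2 * s) := by
    unfold kAux
    rw [← hs]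
    field_simp
    linear_combination x * hssq
  rw [this]
  positivity

lemma gAux_strictMono : StrictMono gAux := by
  have h := fun x => gAux_deriv_pos x
  apply strictMono_of_deriv_pos
  intro x
  rw [(h x).deriv]
  exact mul_pos (deriv_factor_pos x) (Real.exp_pos _)

lemma kAux_nonneg (x : ℝ) : 0 ≤ kAux x := by
  unfold kAux
  have : -x ≤ Real.sqrt (x ^ 2 + 4) := by
    rcases le_or_gt 0 x with hx | hx
    · linarith [(sAux_pos x).le]
    · rw [← Real.sqrt_sq (by linarith : 0 ≤ -x)]
      apply Real.sqrt_le_sqrt; nlinarith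
  linarith

lemma gaussPhi_nonneg (x : ℝ) : 0 ≤ gaussPhi x :=
  setIntegral_nonneg measurableSet_Iic fun t _ => (pdf_pos t).le

lemma gAux_lower (y : ℝ) (hy : y < 0) : 2 / y ≤ gAux y := by
  have hs := sAux_pos y
  have hk : kAux y ≤ 2 / (-y) := by
    have h4 : (Real.sqrt (y ^ 2 + 4) - y) * (Real.sqrt (y ^ 2 + 4) + y) = 4 := by
      have := sAux_sq y; nlinarith
    have hden : -y ≤ Real.sqrt (y ^ 2 + 4) - y := by linarith
    have hkeq : kAux y = 2 / (Real.sqrt (y ^ 2 + 4) - y) := by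
      unfold kAux
      rw [eq_div_iff (by linarith : Real.sqrt (y ^ 2 + 4) - y ≠ 0)]
      nlinarith
    rw [hkeq]
    apply div_le_div_of_nonneg_left (by norm_num) (by linarith) hden
  have hexp : Real.exp (-y ^ 2 / 2) ≤ 1 := by
    rw [← Real.exp_zero]
    apply Real.exp_le_exp.2; nlinarith
  have hke : kAux y * Real.exp (-y ^ 2 / 2) ≤ 2 / (-y) := by
    calc kAux y * Real.exp (-y ^ 2 / 2) ≤ kAux y * 1 :=
          mul_le_mul_of_nonneg_left hexp (kAux_nonneg y)
      _ = kAux y := mul_one _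
      _ ≤ 2 / (-y) := hk
  have hphi : 0 ≤ Real.sqrt (2 * Real.pi) * gaussPhi y := by
    have := gaussPhi_nonneg y; positivity
  unfold gAux
  have : 2 / y = -(2 / (-y)) := by field_simp
  rw [this]
  linarith

lemma gAux_pos (x : ℝ) : 0 < gAux x := by
  have h1 : gAux (x - 1) < gAux x := gAux_strictMono (by linarith)
  have h2 : (0:ℝ) ≤ gAux (x - 1) := by
    have htend : Filter.Tendsto (fun y : ℝ => 2 / y) Filter.atBot (nhds 0) := by
      have h0 : Filter.Tendsto (fun y : ℝ => y⁻¹) Filter.atBot (nhds 0) := by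
        have h := (tendsto_inv_atTop_zero (𝕜 := ℝ)).comp Filter.tendsto_neg_atBot_atTop
        have h2 := h.neg
        simp only [Function.comp] at h2
        exact tendsto_inv_atBot_zero
      have := h0.const_mul (2:ℝ)
      simpa [div_eq_mul_inv] using this
    refine le_of_tendsto htend ?_
    filter_upwards [Filter.eventually_le_atBot (min (x - 1) (-1))] with y hy
    have hy1 : y ≤ x - 1 := le_trans hy (min_le_left _ _)
    have hy2 : y < 0 := lt_of_le_of_lt (le_trans hy (min_le_right _ _)) (by norm_num)
    calc 2 / y ≤ gAux y := gAux_lower y hy2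
      _ ≤ gAux (x - 1) := gAux_strictMono.monotone hy1
  linarith

theorem stmt4 (x : ℝ) :
    gaussPhi x / (2 * stdNormalPdf x) > 1 / (-x + Real.sqrt (x ^ 2 + 4)) := by
  have hs := sAux_pos x
  have hssq := sAux_sq x
  have hxs : 0 < -x + Real.sqrt (x ^ 2 + 4) := by
    set s := Real.sqrt (x ^ 2 + 4)
    have h4 : (s - x) * (s + x) = 4 := by nlinarith
    rcases le_or_gt x 0 with hx | hx
    · linarith
    · nlinarith
  have hrhs : 1 / (-x + Real.sqrt (x ^ 2 + 4)) = kAux x / 2 := by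
    unfold kAux
    rw [div_eq_div_iff hxs.ne' (by norm_num : (2:ℝ) ≠ 0)]
    nlinarith
  have hg := gAux_pos x
  unfold gAux at hg
  have hne : Real.sqrt (2 * Real.pi) ≠ 0 := by positivity
  have hpdf : Real.exp (-x ^ 2 / 2) = Real.sqrt (2 * Real.pi) * stdNormalPdf x := by
    unfold stdNormalPdf; field_simp
  rw [hpdf] at hg
  have hsq2 : 0 < Real.sqrt (2 * Real.pi) := by positivity
  have h2 : kAux x * stdNormalPdf x < gaussPhi x := by
    have h3 : Real.sqrt (2 * Real.pi) * (kAux x * stdNormalPdf x)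
        < Real.sqrt (2 * Real.pi) * gaussPhi x := by nlinarith [hg]
    exact lt_of_mul_lt_mul_left h3 hsq2.le
  rw [hrhs, gt_iff_lt, div_lt_div_iff₀ (by norm_num) (mul_pos two_pos (pdf_pos x))]
  nlinarith [h2]
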